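/- Let ω = (−1 − i√3)/2 and define Λ⁻¹(z,t) = ((i·t − |z|²)/2, z, 1) ∈ ℂ³. For every real s, the three vectors Λ⁻¹(0,0), Λ⁻¹(1,√3), and Λ⁻¹(−ω + e^{is}, √3·cos s − sin s) are linearly dependent over ℂ. -/

import Mathlib

/-- The lift Λ⁻¹(z,t) = ((i·t − |z|²)/2, z, 1) of a point of Heisenberg space. -/
noncomputable def heisLift (z : ℂ) (t : ℝ) : Fin 3 → ℂ :=
  ![(Complex.I * t - (Complex.normSq z : ℂ)) / 2, z, 1]

/-- If i·t − |z|² = z·(i√3 − 1), then the lifts of (0,0), (1,√3) and (z,t) are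
linearly dependent, with coefficients (z−1, −z, 1). -/
lemma heis_aux (z : ℂ) (t : ℝ)
    (h : Complex.I * t - (Complex.normSq z : ℂ) = z * (Complex.I * Real.sqrt 3 - 1)) :
    ¬ LinearIndependent ℂ ![heisLift 0 0, heisLift 1 (Real.sqrt 3), heisLift z t] := by
  rw [Fintype.not_linearIndependent_iff]
  refine ⟨![z - 1, -z, 1], ?_, 2, by exact one_ne_zero⟩
  funext i
  fin_cases i <;>
    simp [heisLift, Fin.sum_univ_three]
  · linear_combination h / 2
  · ring

/-- For every real s, the lifts of P₃ = (0,0), P₁ = (1,√3) and of the point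
(−ω + e^{is}, √3·cos s − sin s) of the parametrised curve are linearly
dependent over ℂ: the curve lies on the ℂ-circle through P₃ and P₁. -/
theorem curve_on_C_circle (s : ℝ) :
    letI ω : ℂ := (-1 - Complex.I * Real.sqrt 3) / 2
    ¬ LinearIndependent ℂ
      ![heisLift 0 0, heisLift 1 (Real.sqrt 3),
        heisLift (-ω + Complex.exp (Complex.I * s))
          (Real.sqrt 3 * Real.cos s - Real.sin s)] := by
  apply heis_aux
  have h3 : (Real.sqrt 3 : ℝ) ^ 2 = 3 := Real.sq_sqrt (by norm_num)
  have hpyth : Real.sin s ^ 2 + Real.cos s ^ 2 = 1 := Real.sin_sq_add_cos_sq s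
  have he : Complex.exp (Complex.I * s) = (Real.cos s : ℂ) + (Real.sin s : ℂ) * Complex.I := by
    rw [mul_comm, Complex.exp_mul_I, Complex.ofReal_cos, Complex.ofReal_sin]
  rw [he, Complex.ext_iff]
  simp [Complex.normSq_apply, Complex.cos_ofReal_re, Complex.sin_ofReal_re]
  constructor <;> nlinarith [h3, hpyth]
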